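/- Let (Γ, π, B) be a binary radix system. Let Γ̂ := {ω ∈ Ω : there exist d ∈ Γ and m ∈ ℤ with d(j) = 0 for all j < m and ω_i = d(m+i) for all i ≥ 0}, and define α := sup{γ ∈ Γ̂ : γ_0 = 0} and β := inf{γ ∈ Γ̂ : γ_0 = 1}, the supremum and infimum being taken in the lexicographic order on Ω. Then (α,β) is an admissible pair. -/

import Mathlib

open scoped Classical

/-- Infinite binary strings. -/
abbrev Omega : Type := ℕ → Bool

/-- The shift operator. -/
def shift (ω : Omega) : Omega := fun n => ω (n + 1)

/-- Strict lexicographic order on `Omega`. -/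
def lexLt (σ ω : Omega) : Prop :=
  ∃ k : ℕ, (∀ i, i < k → σ i = ω i) ∧ σ k < ω k

/-- Non-strict lexicographic order on `Omega`. -/
def lexLe (σ ω : Omega) : Prop := lexLt σ ω ∨ σ = ω

/-- An admissible pair of strings. -/
def Admissible (α β : Omega) : Prop :=
  α 0 = false ∧ α 1 = true ∧ β 0 = true ∧ β 1 = false ∧
  (∀ n : ℕ, ¬ (lexLt α (shift^[n] α) ∧ lexLe (shift^[n] α) β)) ∧
  (∀ n : ℕ, ¬ (lexLe α (shift^[n] β) ∧ lexLt (shift^[n] β) β))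

/-- The address space `Ω_{(α,β,−)}`. -/
def OmegaMinus (α β : Omega) : Set Omega :=
  {ω | ∀ n : ℕ, ¬ (lexLt α (shift^[n] ω) ∧ lexLe (shift^[n] ω) β)}

/-- The address space `Ω_{(α,β,+)}`. -/
def OmegaPlus (α β : Omega) : Set Omega :=
  {ω | ∀ n : ℕ, ¬ (lexLe α (shift^[n] ω) ∧ lexLt (shift^[n] ω) β)}

/-- The address space `Ω_{(α,β)}`. -/
def OmegaUnion (α β : Omega) : Set Omega := OmegaMinus α β ∪ OmegaPlus α β

/-- Length-`n` initial segments of the elements of `Γ`. -/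
def initSegs (Γ : Set Omega) (n : ℕ) : Set (Fin n → Bool) :=
  (fun ω (i : Fin n) => ω i) '' Γ

/-- Exponential growth rate `h(Γ)`. -/
noncomputable def growth (Γ : Set Omega) : ℝ :=
  Filter.limsup (fun n : ℕ => Real.log ((initSegs Γ n).ncard) / (n : ℝ)) Filter.atTop

/-- The projection map `π_x`. -/
noncomputable def proj (x : ℝ) (ω : Omega) : ℝ :=
  (1 - x) * ∑' k : ℕ, (if ω k then (1 : ℝ) else 0) * x ^ k

/-- The equation `Σ α_n x^n = Σ β_n x^n`. -/
def seriesEq (α β : Omega) (x : ℝ) : Prop :=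
  (∑' n : ℕ, (if α n then (1 : ℝ) else 0) * x ^ n) =
    (∑' n : ℕ, (if β n then (1 : ℝ) else 0) * x ^ n)

/-- Solutions in `[1/2,1)` of `Σ α_n x^n = Σ β_n x^n`. -/
def baseSet (α β : Omega) : Set ℝ :=
  {x : ℝ | x ∈ Set.Ico (1/2 : ℝ) 1 ∧ seriesEq α β x}

/-- A decimal: a two-sided binary string vanishing far to the left. -/
def IsDecimal (d : ℤ → Bool) : Prop := ∃ m : ℤ, ∀ j, j < m → d j = false

/-- Strict order on decimals. -/
def decLt (d e : ℤ → Bool) : Prop :=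
  ∃ j : ℤ, (∀ i, i < j → d i = e i) ∧ d j < e j

/-- The set `Γ^•` of decimals obtained from strings in `Γ`. -/
def dot (Γ : Set Omega) : Set (ℤ → Bool) :=
  {d | ∃ m : ℤ, ∃ γ ∈ Γ, (∀ j, j < m → d j = false) ∧ ∀ i : ℕ, d (m + i) = γ i}

/-- Prepend a `0` to a string. -/
def cons0 (ω : Omega) : Omega := fun n => match n with | 0 => false | k + 1 => ω k

/-- The space `Ω⁰_{(α,β,−)}`. -/
def Omega0Minus (α β : Omega) : Set Omega :=
  {ω ∈ OmegaMinus α β | lexLe (cons0 ω) α}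

/-- The space `Ω⁰_{(α,β,+)}`. -/
def Omega0Plus (α β : Omega) : Set Omega :=
  {ω ∈ OmegaPlus α β | lexLt (cons0 ω) α}

/-- The address space of decimals `Ω^•_{(α,β,−)}`. -/
def dotMinus (α β : Omega) : Set (ℤ → Bool) := dot (Omega0Minus α β)

/-- The address space of decimals `Ω^•_{(α,β,+)}`. -/
def dotPlus (α β : Omega) : Set (ℤ → Bool) := dot (Omega0Plus α β)

/-- The address space of decimals `Ω^•_{(α,β)}`. -/
def dotUnion (α β : Omega) : Set (ℤ → Bool) :=
  dot (Omega0Minus α β ∪ Omega0Plus α β)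

/-- The radix map `d ↦ Σ_{j ∈ ℤ} d(j)·B^(−j)`. -/
noncomputable def radixVal (B : ℝ) (d : ℤ → Bool) : ℝ :=
  ∑' j : ℤ, (if d j then (1 : ℝ) else 0) * B ^ (-j)

/-- Shift invariance for a set of decimals. -/
def ShiftInvariantDec (Γ : Set (ℤ → Bool)) : Prop :=
  ∀ d ∈ Γ, ∀ k m : ℤ,
    (fun j : ℤ => if m ≤ j then d (j + k) else false) ∈ Γ

/-- A binary radix system `(Γ, π, B)`: `B > 1`, `Γ` a shift-invariant set of decimals,
and the radix map `d ↦ Σ_j d(j)·B^(−j)` is a strictly increasing bijection from `Γ`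
onto `[0,∞)`. -/
structure BinaryRadixSystem where
  Γ : Set (ℤ → Bool)
  B : ℝ
  hB : 1 < B
  hdec : ∀ d ∈ Γ, IsDecimal d
  hshift : ShiftInvariantDec Γ
  hmono : ∀ d ∈ Γ, ∀ e ∈ Γ, decLt d e → radixVal B d < radixVal B e
  hbij : Set.BijOn (radixVal B) Γ (Set.Ici (0 : ℝ))

/-- The set `Γ̂` of infinite strings obtained from the decimals in `Γ` by removing the
decimal point (and the zeros to the left of the support). -/
def hatGamma (Γ : Set (ℤ → Bool)) : Set Omega :=
  {ω | ∃ d ∈ Γ, ∃ m : ℤ, (∀ j, j < m → d j = false) ∧ ∀ i : ℕ, ω i = d (m + i)}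

section Aux

/-! ### Basic lexicographic order lemmas -/

lemma lexLt_irrefl (ω : Omega) : ¬ lexLt ω ω := by
  rintro ⟨k, -, hk⟩; exact lt_irrefl _ hk

lemma lexLt_trans {a b c : Omega} (h1 : lexLt a b) (h2 : lexLt b c) : lexLt a c := by
  obtain ⟨k1, ha1, hb1⟩ := h1
  obtain ⟨k2, ha2, hb2⟩ := h2
  rcases lt_trichotomy k1 k2 with h | h | h
  · exact ⟨k1, fun i hi => (ha1 i hi).trans (ha2 i (hi.trans h)),
      lt_of_lt_of_le hb1 (le_of_eq (ha2 k1 h))⟩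
  · subst h; exact ⟨k1, fun i hi => (ha1 i hi).trans (ha2 i hi), lt_trans hb1 hb2⟩
  · exact ⟨k2, fun i hi => (ha1 i (hi.trans h)).trans (ha2 i hi),
      lt_of_le_of_lt (le_of_eq (ha1 k2 h)) hb2⟩

lemma lexLt_asymm {a b : Omega} (h1 : lexLt a b) (h2 : lexLt b a) : False :=
  lexLt_irrefl a (lexLt_trans h1 h2)

lemma lexLe_trans {a b c : Omega} (h1 : lexLe a b) (h2 : lexLe b c) : lexLe a c := by
  rcases h1 with h1 | rfl
  · rcases h2 with h2 | rfl
    · exact Or.inl (lexLt_trans h1 h2)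
    · exact Or.inl h1
  · exact h2

lemma lexLe_antisymm {a b : Omega} (h1 : lexLe a b) (h2 : lexLe b a) : a = b := by
  rcases h1 with h1 | rfl
  · rcases h2 with h2 | rfl
    · exact absurd h2 (fun h => lexLt_asymm h1 h)
    · rfl
  · rfl

lemma not_lexLt_of_lexLe {a b : Omega} (h : lexLe a b) : ¬ lexLt b a := by
  rintro h2
  rcases h with h1 | rfl
  · exact lexLt_asymm h1 h2
  · exact lexLt_irrefl a h2

lemma lexLt_of_agree {a b : Omega} {k : ℕ} (hag : ∀ i, i < k → a i = b i)
    (ha : a k = false) (hb : b k = true) : lexLt a b :=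
  ⟨k, hag, by simp [ha, hb]⟩

/-- From `lexLt` plus agreement below `n`, the witness can be taken `≥ n`. -/
lemma lexLt_witness_ge {a b : Omega} (h : lexLt a b) {n : ℕ}
    (hag : ∀ i, i < n → a i = b i) :
    ∃ k, n ≤ k ∧ (∀ i, i < k → a i = b i) ∧ a k = false ∧ b k = true := by
  obtain ⟨k, hk1, hk2⟩ := h
  rw [Bool.lt_iff] at hk2
  refine ⟨k, ?_, hk1, hk2.1, hk2.2⟩
  by_contra hlt
  push_neg at hlt
  rw [hag k hlt, hk2.2] at hk2
  exact absurd hk2.1 (by simp)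

/-- Shifting preserves order given agreement on the first `n` coordinates. -/
lemma lexLe_shift' {a b : Omega} {n : ℕ} (h : lexLe a b) (hag : ∀ i, i < n → a i = b i) :
    lexLe (fun i => a (n + i)) (fun i => b (n + i)) := by
  rcases h with h | rfl
  · obtain ⟨k, hk, hk1, hk2, hk3⟩ := lexLt_witness_ge h hag
    refine Or.inl ⟨k - n, fun i hi => hk1 (n + i) (by omega), ?_⟩
    have heq : n + (k - n) = k := by omega
    show a (n + (k - n)) < b (n + (k - n))
    rw [heq, hk2, hk3]; simp
  · exact Or.inr rfl

lemma nat_least_diff {a b : Omega} (h : ∃ i, a i ≠ b i) :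
    ∃ k, a k ≠ b k ∧ ∀ i, i < k → a i = b i := by
  classical
  exact ⟨Nat.find h, Nat.find_spec h, fun i hi => not_not.mp (Nat.find_min h hi)⟩

lemma lexLe_tailTrue {a b : Omega} {n : ℕ} (hag : ∀ i, i < n → a i = b i)
    (hb : ∀ i, n ≤ i → b i = true) : lexLe a b := by
  by_cases h : a = b
  · exact Or.inr h
  · have hex : ∃ i, a i ≠ b i := by
      by_contra hc; push_neg at hc; exact h (funext hc)
    obtain ⟨k, hk, hkag⟩ := nat_least_diff hex
    have hkn : n ≤ k := by
      by_contra hc; push_neg at hc; exact hk (hag k hc)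
    have hbk : b k = true := hb k hkn
    have hak : a k = false := by
      rw [hbk] at hk
      cases hcase : a k
      · rfl
      · exact absurd hcase hk
    exact Or.inl (lexLt_of_agree hkag hak hbk)

lemma lexLe_tailFalse {a b : Omega} {n : ℕ} (hag : ∀ i, i < n → a i = b i)
    (ha : ∀ i, n ≤ i → a i = false) : lexLe a b := by
  by_cases h : a = b
  · exact Or.inr h
  · have hex : ∃ i, a i ≠ b i := by
      by_contra hc; push_neg at hc; exact h (funext hc)
    obtain ⟨k, hk, hkag⟩ := nat_least_diff hex
    have hkn : n ≤ k := by
      by_contra hc; push_neg at hc; exact hk (hag k hc)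
    have hak : a k = false := ha k hkn
    have hbk : b k = true := by
      rw [hak] at hk
      cases hcase : b k
      · exact absurd hcase.symm hk
      · rfl
    exact Or.inl (lexLt_of_agree hkag hak hbk)

/-! ### Decimal lemmas -/

lemma decLt_asymm {d e : ℤ → Bool} (h1 : decLt d e) (h2 : decLt e d) : False := by
  obtain ⟨j1, ha1, hb1⟩ := h1
  obtain ⟨j2, ha2, hb2⟩ := h2
  rcases lt_trichotomy j1 j2 with h | h | h
  · rw [ha2 j1 h] at hb1; exact lt_irrefl _ (lt_trans hb1 hb1)
  · subst h; exact lt_irrefl _ (lt_trans hb1 hb2)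
  · rw [ha1 j2 h] at hb2; exact lt_irrefl _ (lt_trans hb2 hb2)

lemma decLt_total {d e : ℤ → Bool} (hd : IsDecimal d) (he : IsDecimal e)
    (hne : d ≠ e) : decLt d e ∨ decLt e d := by
  obtain ⟨md, hmd⟩ := hd
  obtain ⟨me, hme⟩ := he
  have hbdd : ∃ b : ℤ, ∀ z : ℤ, d z ≠ e z → b ≤ z := by
    refine ⟨min md me, fun z hz => ?_⟩
    by_contra h
    push_neg at h
    exact hz (by rw [hmd z (lt_of_lt_of_le h (min_le_left _ _)),
      hme z (lt_of_lt_of_le h (min_le_right _ _))])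
  have hinh : ∃ z : ℤ, d z ≠ e z := by
    by_contra h; push_neg at h; exact hne (funext h)
  obtain ⟨j, hj, hjle⟩ := Int.exists_least_of_bdd hbdd hinh
  have hag : ∀ i, i < j → d i = e i := by
    intro i hi; by_contra h; exact absurd (hjle i h) (by omega)
  have : d j < e j ∨ e j < d j := by
    rcases Bool.eq_false_or_eq_true (d j) with h1 | h1 <;>
    rcases Bool.eq_false_or_eq_true (e j) with h2 | h2 <;>
      simp_all [Bool.lt_iff]
  rcases this with h | h
  · exact Or.inl ⟨j, hag, h⟩
  · exact Or.inr ⟨j, fun i hi => (hag i hi).symm, h⟩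

lemma exists_least_true {d : ℤ → Bool} (hd : IsDecimal d) (h : ∃ j, d j = true) :
    ∃ j0, d j0 = true ∧ ∀ j, j < j0 → d j = false := by
  obtain ⟨m, hm⟩ := hd
  obtain ⟨j0, hj0, hle⟩ := Int.exists_least_of_bdd
    (P := fun j => d j = true)
    ⟨m, fun z hz => by
      by_contra h'; push_neg at h'
      simp only [hm z h'] at hz
      exact Bool.noConfusion hz⟩ h
  refine ⟨j0, hj0, fun j hj => ?_⟩
  by_contra h'
  have := hle j (by simpa using h')
  omega

/-- Place a string `ω` at position `t` as a decimal. -/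
def place (ω : Omega) (t : ℤ) : ℤ → Bool := fun j => if t ≤ j then ω (j - t).toNat else false

lemma place_mem (R : BinaryRadixSystem) {ω : Omega} (hω : ω ∈ hatGamma R.Γ) (t : ℤ) :
    place ω t ∈ R.Γ := by
  obtain ⟨d, hd, m, hm, hread⟩ := hω
  have h := R.hshift d hd (m - t) t
  convert h using 1
  funext j
  simp only [place]
  by_cases h' : t ≤ j
  · simp only [if_pos h']
    have heq : j + (m - t) = m + ((j - t).toNat : ℤ) := by omega
    rw [heq, ← hread]
  · simp [if_neg h']

lemma radixVal_allFalse (B : ℝ) : radixVal B (fun _ => false) = 0 := by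
  simp [radixVal]

lemma exists_nonzero (R : BinaryRadixSystem) : ∃ d ∈ R.Γ, ∃ j, d j = true := by
  obtain ⟨d, hd, hval⟩ := R.hbij.surjOn (a := (1:ℝ)) (by norm_num)
  refine ⟨d, hd, ?_⟩
  by_contra h
  push_neg at h
  have hzero : d = fun _ => false := funext (fun j => by simpa using h j)
  rw [hzero, radixVal_allFalse] at hval
  norm_num at hval

/-- Monotonicity reflection: comparison of values gives comparison of decimals. -/
lemma decLt_of_radixLt (R : BinaryRadixSystem) {d e : ℤ → Bool}
    (hd : d ∈ R.Γ) (he : e ∈ R.Γ) (h : radixVal R.B d < radixVal R.B e) : decLt d e := by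
  have hne : d ≠ e := by rintro rfl; exact lt_irrefl _ h
  rcases decLt_total (R.hdec d hd) (R.hdec e he) hne with h' | h'
  · exact h'
  · exact absurd (R.hmono e he d hd h') (by linarith)

/-! ### `hatGamma` structure lemmas -/

lemma mem_hatGamma_of_reading {Γ : Set (ℤ → Bool)} {d : ℤ → Bool} {m : ℤ}
    (hd : d ∈ Γ) (hm : ∀ j, j < m → d j = false) :
    (fun i : ℕ => d (m + i)) ∈ hatGamma Γ :=
  ⟨d, hd, m, hm, fun _ => rfl⟩

lemma hatGamma_shift {Γ : Set (ℤ → Bool)} (hΓ : ShiftInvariantDec Γ) {ω : Omega}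
    (hω : ω ∈ hatGamma Γ) : shift ω ∈ hatGamma Γ := by
  obtain ⟨d, hd, m, hm, hr⟩ := hω
  refine ⟨fun j => if m + 1 ≤ j then d (j + 0) else false, hΓ d hd 0 (m + 1), m + 1,
    fun j hj => by simp only []; rw [if_neg (by omega : ¬ m + 1 ≤ j)], fun i => ?_⟩
  show ω (i + 1) = if m + 1 ≤ m + 1 + (i : ℤ) then d (m + 1 + (i : ℤ) + 0) else false
  rw [if_pos (by omega : m + 1 ≤ m + 1 + (i : ℤ))]
  rw [hr (i + 1)]
  congr 1
  push_cast
  ring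

lemma hatGamma_shift_iter {Γ : Set (ℤ → Bool)} (hΓ : ShiftInvariantDec Γ) {ω : Omega}
    (hω : ω ∈ hatGamma Γ) (n : ℕ) : shift^[n] ω ∈ hatGamma Γ := by
  induction n with
  | zero => exact hω
  | succ n ih => rw [Function.iterate_succ_apply']; exact hatGamma_shift hΓ ih

lemma shift_iter_apply (n : ℕ) : ∀ (ω : Omega) (i : ℕ), shift^[n] ω i = ω (n + i) := by
  induction n with
  | zero => intro ω i; simp
  | succ n ih =>
    intro ω i
    rw [Function.iterate_succ_apply]
    rw [ih (shift ω) i]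
    show ω (n + i + 1) = ω (n + 1 + i)
    congr 1
    omega

lemma shift_iter_eq (ω : Omega) (n : ℕ) : shift^[n] ω = fun i => ω (n + i) :=
  funext (shift_iter_apply n ω)

end Aux
section Aux2

/-! ### The gap lemma: `α` and `β` cannot both belong to `Γ̂`. -/

lemma gap_lemma (R : BinaryRadixSystem) (α β : Omega)
    (hαub : ∀ γ ∈ {γ ∈ hatGamma R.Γ | γ 0 = false}, lexLe γ α)
    (hβlb : ∀ γ ∈ {γ ∈ hatGamma R.Γ | γ 0 = true}, lexLe β γ)
    (hα0 : α 0 = false) (hα1 : α 1 = true) (hβ0 : β 0 = true)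
    (hαmem : α ∈ hatGamma R.Γ) (hβmem : β ∈ hatGamma R.Γ) : False := by
  classical
  set dα := place α 0 with hdα
  set dβ := place β 0 with hdβ
  have hdαΓ : dα ∈ R.Γ := place_mem R hαmem 0
  have hdβΓ : dβ ∈ R.Γ := place_mem R hβmem 0
  have hdα_neg : ∀ j : ℤ, j < 0 → dα j = false := fun j hj => by
    simp [hdα, place, if_neg (by omega : ¬ (0:ℤ) ≤ j)]
  have hdβ_neg : ∀ j : ℤ, j < 0 → dβ j = false := fun j hj => by
    simp [hdβ, place, if_neg (by omega : ¬ (0:ℤ) ≤ j)]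
  have hdα_nn : ∀ i : ℕ, dα (i : ℤ) = α i := fun i => by
    simp [hdα, place, if_pos (by omega : (0:ℤ) ≤ (i:ℤ))]
  have hdβ_nn : ∀ i : ℕ, dβ (i : ℤ) = β i := fun i => by
    simp [hdβ, place, if_pos (by omega : (0:ℤ) ≤ (i:ℤ))]
  have hlt : decLt dα dβ := by
    refine ⟨0, fun i hi => by rw [hdα_neg i hi, hdβ_neg i hi], ?_⟩
    have h1 : dα 0 = false := by have := hdα_nn 0; simpa [hα0] using this
    have h2 : dβ 0 = true := by have := hdβ_nn 0; simpa [hβ0] using this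
    simp [h1, h2]
  have hvlt : radixVal R.B dα < radixVal R.B dβ := R.hmono dα hdαΓ dβ hdβΓ hlt
  have hvα_nn : (0:ℝ) ≤ radixVal R.B dα := R.hbij.mapsTo hdαΓ
  obtain ⟨f, hfΓ, hfval⟩ := R.hbij.surjOn
    (a := (radixVal R.B dα + radixVal R.B dβ) / 2) (by simp only [Set.mem_Ici]; linarith)
  have hv1 : radixVal R.B dα < radixVal R.B f := by rw [hfval]; linarith
  have hv2 : radixVal R.B f < radixVal R.B dβ := by rw [hfval]; linarith
  have h1 : decLt dα f := decLt_of_radixLt R hdαΓ hfΓ hv1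
  have h2 : decLt f dβ := decLt_of_radixLt R hfΓ hdβΓ hv2
  -- f has a true entry
  have hftrue : ∃ j, f j = true := by
    obtain ⟨j, -, hj⟩ := h1
    rw [Bool.lt_iff] at hj
    exact ⟨j, hj.2⟩
  obtain ⟨j0, hj0t, hj0min⟩ := exists_least_true (R.hdec f hfΓ) hftrue
  -- j0 ≥ 0
  have hj0_nonneg : 0 ≤ j0 := by
    by_contra hc
    push_neg at hc
    refine decLt_asymm h2 ⟨j0, fun i hi => ?_, ?_⟩
    · rw [hdβ_neg i (by omega), hj0min i hi]
    · rw [hj0t, hdβ_neg j0 hc]; simp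
  -- j0 ≤ 1
  have hj0_le : j0 ≤ 1 := by
    by_contra hc
    push_neg at hc
    refine decLt_asymm h1 ⟨1, fun i hi => ?_, ?_⟩
    · rcases lt_or_ge i 0 with h | h
      · rw [hdα_neg i h, hj0min i (by omega)]
      · have : i = 0 := by omega
        subst this
        rw [hj0min 0 (by omega)]
        have := hdα_nn 0
        simp only [Nat.cast_zero] at this
        rw [this, hα0]
    · rw [hj0min 1 (by omega)]
      have := hdα_nn 1
      simp only [Nat.cast_one] at this
      rw [this, hα1]
      simp
  interval_cases j0
  · -- j0 = 0 : the string read from f starting at 0 begins with 1 but is less than β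
    set γ : Omega := fun i : ℕ => f ((0:ℤ) + i) with hγ
    have hγmem : γ ∈ hatGamma R.Γ :=
      mem_hatGamma_of_reading hfΓ (fun j hj => hj0min j hj)
    have hγ0 : γ 0 = true := by
      show f ((0:ℤ) + (0:ℕ)) = true
      simpa using hj0t
    have hβγ : lexLe β γ := hβlb γ ⟨hγmem, hγ0⟩
    obtain ⟨j, hjag, hjlt⟩ := h2
    rw [Bool.lt_iff] at hjlt
    have hjnn : 0 ≤ j := by
      by_contra hc
      push_neg at hc
      rw [hdβ_neg j hc] at hjlt
      exact Bool.noConfusion hjlt.2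
    refine not_lexLt_of_lexLe hβγ (lexLt_of_agree (k := j.toNat) (fun i hi => ?_) ?_ ?_)
    · show f ((0:ℤ) + i) = β i
      rw [← hdβ_nn i, zero_add]
      exact hjag i (by omega)
    · show f ((0:ℤ) + (j.toNat : ℤ)) = false
      rw [zero_add]
      have : (j.toNat : ℤ) = j := by omega
      rw [this, hjlt.1]
    · rw [← hdβ_nn j.toNat]
      have : ((j.toNat : ℕ) : ℤ) = j := by omega
      rw [this, hjlt.2]
  · -- j0 = 1 : the string read from f starting at 0 begins with 0 but exceeds α
    set γ : Omega := fun i : ℕ => f ((0:ℤ) + i) with hγ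
    have hγmem : γ ∈ hatGamma R.Γ :=
      mem_hatGamma_of_reading hfΓ (fun j hj => hj0min j (by omega))
    have hγ0 : γ 0 = false := by
      show f ((0:ℤ) + (0:ℕ)) = false
      simpa using hj0min 0 (by omega)
    have hγα : lexLe γ α := hαub γ ⟨hγmem, hγ0⟩
    obtain ⟨j, hjag, hjlt⟩ := h1
    rw [Bool.lt_iff] at hjlt
    have hjnn : 0 ≤ j := by
      by_contra hc
      push_neg at hc
      rw [hj0min j (by omega)] at hjlt
      exact Bool.noConfusion hjlt.2
    refine not_lexLt_of_lexLe hγα (lexLt_of_agree (k := j.toNat) (fun i hi => ?_) ?_ ?_)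
    · show α i = f ((0:ℤ) + i)
      rw [← hdα_nn i, zero_add]
      exact hjag i (by omega)
    · rw [← hdα_nn j.toNat]
      have : ((j.toNat : ℕ) : ℤ) = j := by omega
      rw [this, hjlt.1]
    · show f ((0:ℤ) + (j.toNat : ℤ)) = true
      rw [zero_add]
      have : (j.toNat : ℤ) = j := by omega
      rw [this, hjlt.2]

end Aux2

section Aux3

/-! ### Witness strings in `Γ̂` -/

lemma witness01 (R : BinaryRadixSystem) :
    ∃ γ ∈ hatGamma R.Γ, γ 0 = false ∧ γ 1 = true := by
  obtain ⟨d, hd, htrue⟩ := exists_nonzero R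
  obtain ⟨j0, hj0t, hj0min⟩ := exists_least_true (R.hdec d hd) htrue
  refine ⟨fun i : ℕ => d (j0 - 1 + i), mem_hatGamma_of_reading hd
    (fun j hj => hj0min j (by omega)), ?_, ?_⟩
  · show d (j0 - 1 + ((0:ℕ):ℤ)) = false
    rw [show j0 - 1 + ((0:ℕ):ℤ) = j0 - 1 by simp]
    exact hj0min _ (by omega)
  · show d (j0 - 1 + ((1:ℕ):ℤ)) = true
    rw [show j0 - 1 + ((1:ℕ):ℤ) = j0 by push_cast; ring]
    exact hj0t

lemma witness1 (R : BinaryRadixSystem) :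
    ∃ γ ∈ hatGamma R.Γ, γ 0 = true := by
  obtain ⟨d, hd, htrue⟩ := exists_nonzero R
  obtain ⟨j0, hj0t, hj0min⟩ := exists_least_true (R.hdec d hd) htrue
  refine ⟨fun i : ℕ => d (j0 + i), mem_hatGamma_of_reading hd hj0min, ?_⟩
  show d (j0 + ((0:ℕ):ℤ)) = true
  rw [show j0 + ((0:ℕ):ℤ) = j0 by simp]
  exact hj0t

/-- The decimal which is `1` from position `j` on. -/
def eDec (j : ℤ) : ℤ → Bool := fun i => decide (j ≤ i)

lemma decLt_eDec {a b : ℤ} (h : b < a) : decLt (eDec a) (eDec b) := by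
  refine ⟨b, fun i hi => ?_, ?_⟩
  · simp only [eDec]
    rw [decide_eq_false (by omega), decide_eq_false (by omega)]
  · simp only [eDec]
    rw [decide_eq_false (by omega), decide_eq_true (by omega : b ≤ b)]
    simp

lemma eDec_lt_imp {a b : ℤ} (h : decLt (eDec a) (eDec b)) : b < a := by
  by_contra hc
  push_neg at hc
  rcases lt_or_eq_of_le hc with h' | h'
  · exact decLt_asymm h (decLt_eDec h')
  · subst h'
    obtain ⟨j, -, hj⟩ := h
    exact lt_irrefl _ hj

lemma witness10 (R : BinaryRadixSystem) :
    ∃ γ ∈ hatGamma R.Γ, γ 0 = true ∧ γ 1 = false := by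
  by_contra hcon
  push_neg at hcon
  have hone : ∀ γ ∈ hatGamma R.Γ, γ 0 = true → γ 1 = true := by
    intro γ hγ h0
    cases h : γ 1
    · exact absurd h (hcon γ hγ h0)
    · rfl
  -- every string in Γ̂ starting with 1 is identically 1
  have halltrue : ∀ n : ℕ, ∀ γ ∈ hatGamma R.Γ, γ 0 = true → γ n = true := by
    intro n
    induction n with
    | zero => intro γ _ h0; exact h0
    | succ n ih =>
      intro γ hγ h0
      have h1 : shift γ ∈ hatGamma R.Γ := hatGamma_shift R.hshift hγ
      have h2 : shift γ 0 = true := hone γ hγ h0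
      have := ih (shift γ) h1 h2
      exact this
  -- every nonzero decimal in Γ is of the form eDec j
  have hstruct : ∀ d ∈ R.Γ, (∃ j, d j = true) → ∃ j, d = eDec j := by
    intro d hd htrue
    obtain ⟨j0, hj0t, hj0min⟩ := exists_least_true (R.hdec d hd) htrue
    refine ⟨j0, funext fun i => ?_⟩
    rcases lt_or_ge i j0 with h | h
    · rw [hj0min i h]
      simp only [eDec]
      rw [decide_eq_false (by omega)]
    · set γ : Omega := fun i : ℕ => d (j0 + i) with hγ
      have hγmem : γ ∈ hatGamma R.Γ := mem_hatGamma_of_reading hd hj0min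
      have hγ0 : γ 0 = true := by
        show d (j0 + ((0:ℕ):ℤ)) = true
        rw [show j0 + ((0:ℕ):ℤ) = j0 by simp]
        exact hj0t
      have := halltrue (i - j0).toNat γ hγmem hγ0
      have heq : d i = true := by
        have h2 : γ (i - j0).toNat = d i := by
          show d (j0 + ((i - j0).toNat : ℤ)) = d i
          congr 1
          omega
        rw [← h2]
        exact this
      rw [heq]
      simp only [eDec]
      rw [decide_eq_true (by omega : j0 ≤ i)]
  -- get one eDec in Γ, then all of them
  obtain ⟨d, hd, htrue⟩ := exists_nonzero R
  obtain ⟨j1, hj1⟩ := hstruct d hd htrue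
  subst hj1
  have hall : ∀ t : ℤ, eDec t ∈ R.Γ := by
    intro t
    have h := R.hshift _ hd (j1 - t) t
    convert h using 1
    funext j
    by_cases hc : t ≤ j
    · simp only [eDec, if_pos hc]
      rw [decide_eq_true (by omega), decide_eq_true (by omega)]
    · simp only [eDec, if_neg hc]
      rw [decide_eq_false (by omega)]
  -- values of eDec (j1+1) and eDec j1; find a value strictly between
  have hv : radixVal R.B (eDec (j1 + 1)) < radixVal R.B (eDec j1) :=
    R.hmono _ (hall _) _ (hall _) (decLt_eDec (by omega))
  have hnn : (0:ℝ) ≤ radixVal R.B (eDec (j1 + 1)) := R.hbij.mapsTo (hall _)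
  obtain ⟨f, hfΓ, hfval⟩ := R.hbij.surjOn
    (a := (radixVal R.B (eDec (j1 + 1)) + radixVal R.B (eDec j1)) / 2)
    (by simp only [Set.mem_Ici]; linarith)
  have hv1 : radixVal R.B (eDec (j1 + 1)) < radixVal R.B f := by rw [hfval]; linarith
  have hv2 : radixVal R.B f < radixVal R.B (eDec j1) := by rw [hfval]; linarith
  have hfne : ∃ j, f j = true := by
    by_contra hc
    push_neg at hc
    have hzero : f = fun _ => false := funext (fun j => by simpa using hc j)
    rw [hzero, radixVal_allFalse] at hfval
    have : (0:ℝ) < radixVal R.B f := lt_of_le_of_lt hnn hv1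
    rw [hzero, radixVal_allFalse] at this
    exact lt_irrefl _ this
  obtain ⟨j3, hj3⟩ := hstruct f hfΓ hfne
  subst hj3
  have ha : j3 < j1 + 1 := eDec_lt_imp (decLt_of_radixLt R (hall _) hfΓ hv1)
  have hb : j1 < j3 := eDec_lt_imp (decLt_of_radixLt R hfΓ (hall _) hv2)
  omega

/-! ### Approximation of suprema and infima in the lexicographic order -/

lemma approx_sup (A : Set Omega) (α : Omega)
    (hub : ∀ γ ∈ A, lexLe γ α)
    (hlub : ∀ δ : Omega, (∀ γ ∈ A, lexLe γ δ) → lexLe α δ)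
    (hne : A.Nonempty) :
    ∀ n : ℕ, ∃ γ ∈ A, ∀ i, i < n → γ i = α i := by
  intro n
  induction n with
  | zero => exact ⟨hne.choose, hne.choose_spec, fun i hi => absurd hi (by omega)⟩
  | succ n ih =>
    obtain ⟨γ, hγA, hag⟩ := ih
    by_cases hn : γ n = α n
    · refine ⟨γ, hγA, fun i hi => ?_⟩
      rcases lt_or_eq_of_le (Nat.lt_succ_iff.mp hi) with h | h
      · exact hag i h
      · subst h; exact hn
    · -- γ n ≠ α n forces α n = true
      have hγne : γ ≠ α := fun h => hn (by rw [h])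
      have hγlt : lexLt γ α := (hub γ hγA).resolve_right hγne
      obtain ⟨k, hkn, hkag, hkf, hkt⟩ := lexLt_witness_ge hγlt hag
      have hkeq : k = n := by
        by_contra hc
        exact hn (hkag n (by omega))
      subst hkeq
      -- so α k = true, γ k = false ; suppose no element agrees up to k+1
      by_contra hcon
      push_neg at hcon
      set δ : Omega := fun i => if i < k then α i else if i = k then false else true with hδ
      have hδub : ∀ γ' ∈ A, lexLe γ' δ := by
        intro γ' hγ'A
        by_cases hagree : ∀ i, i < k → γ' i = α i
        · have hγ'k : γ' k = false := by
            have hne' : γ' k ≠ α k := by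
              intro h
              obtain ⟨i, hik, hine⟩ := hcon γ' hγ'A
              rcases lt_or_eq_of_le (Nat.lt_succ_iff.mp hik) with h' | h'
              · exact hine (hagree i h')
              · subst h'; exact hine h
            rw [hkt] at hne'
            cases hc : γ' k
            · rfl
            · exact absurd hc hne'
          refine lexLe_tailTrue (n := k + 1) (fun i hi => ?_) (fun i hi => ?_)
          · rcases lt_or_eq_of_le (Nat.lt_succ_iff.mp hi) with h' | h'
            · rw [hagree i h', hδ]; simp [if_pos h']
            · subst h'
              rw [hγ'k, hδ]
              simp
          · rw [hδ]
            simp only []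
            rw [if_neg (by omega), if_neg (by omega)]
        · push_neg at hagree
          obtain ⟨k', hk'lt, hk'ne⟩ := hagree
          obtain ⟨k0, hk0ne, hk0ag⟩ := nat_least_diff ⟨k', hk'ne⟩
          have hk0lt : k0 < k := by
            rcases lt_or_ge k0 k with h | h
            · exact h
            · exact absurd (hk0ag k' (by omega)) hk'ne
          have hγ'lt : lexLt γ' α :=
            (hub γ' hγ'A).resolve_right (fun h => hk0ne (by rw [h]))
          obtain ⟨k1, hk1ge, hk1ag, hk1f, hk1t⟩ := lexLt_witness_ge hγ'lt hk0ag
          have hk1eq : k1 = k0 := by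
            by_contra hc
            exact hk0ne (hk1ag k0 (by omega))
          subst hk1eq
          exact Or.inl (lexLt_of_agree (k := k1)
            (fun i hi => by rw [hk1ag i hi, hδ]; simp [if_pos (by omega : i < k)])
            hk1f (by rw [hδ]; simp only []; rw [if_pos hk0lt]; exact hk1t))
      have hαδ : lexLe α δ := hlub δ hδub
      refine not_lexLt_of_lexLe hαδ (lexLt_of_agree (k := k) (fun i hi => ?_) ?_ hkt)
      · rw [hδ]; simp [if_pos hi]
      · rw [hδ]; simp

lemma approx_inf (A : Set Omega) (β : Omega)
    (hlb : ∀ γ ∈ A, lexLe β γ)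
    (hglb : ∀ δ : Omega, (∀ γ ∈ A, lexLe δ γ) → lexLe δ β)
    (hne : A.Nonempty) :
    ∀ n : ℕ, ∃ γ ∈ A, ∀ i, i < n → γ i = β i := by
  intro n
  induction n with
  | zero => exact ⟨hne.choose, hne.choose_spec, fun i hi => absurd hi (by omega)⟩
  | succ n ih =>
    obtain ⟨γ, hγA, hag⟩ := ih
    by_cases hn : γ n = β n
    · refine ⟨γ, hγA, fun i hi => ?_⟩
      rcases lt_or_eq_of_le (Nat.lt_succ_iff.mp hi) with h | h
      · exact hag i h
      · subst h; exact hn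
    · have hγne : β ≠ γ := fun h => hn (by rw [← h])
      have hγlt : lexLt β γ := (hlb γ hγA).resolve_right hγne
      obtain ⟨k, hkn, hkag, hkf, hkt⟩ := lexLt_witness_ge hγlt (fun i hi => (hag i hi).symm)
      have hkeq : k = n := by
        by_contra hc
        exact hn ((hkag n (by omega)).symm)
      subst hkeq
      -- β k = false, γ k = true
      by_contra hcon
      push_neg at hcon
      set δ : Omega := fun i => if i < k then β i else if i = k then true else false with hδ
      have hδlb : ∀ γ' ∈ A, lexLe δ γ' := by
        intro γ' hγ'A
        by_cases hagree : ∀ i, i < k → γ' i = β i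
        · have hγ'k : γ' k = true := by
            have hne' : γ' k ≠ β k := by
              intro h
              obtain ⟨i, hik, hine⟩ := hcon γ' hγ'A
              rcases lt_or_eq_of_le (Nat.lt_succ_iff.mp hik) with h' | h'
              · exact hine (hagree i h')
              · subst h'; exact hine h
            rw [hkf] at hne'
            cases hc : γ' k
            · exact absurd hc hne'
            · rfl
          refine lexLe_tailFalse (n := k + 1) (fun i hi => ?_) (fun i hi => ?_)
          · rcases lt_or_eq_of_le (Nat.lt_succ_iff.mp hi) with h' | h'
            · rw [hagree i h', hδ]; simp [if_pos h']
            · subst h'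
              rw [hγ'k, hδ]
              simp
          · rw [hδ]
            simp only []
            rw [if_neg (by omega), if_neg (by omega)]
        · push_neg at hagree
          obtain ⟨k', hk'lt, hk'ne⟩ := hagree
          obtain ⟨k0, hk0ne, hk0ag⟩ := nat_least_diff ⟨k', hk'ne⟩
          have hk0lt : k0 < k := by
            rcases lt_or_ge k0 k with h | h
            · exact h
            · exact absurd (hk0ag k' (by omega)) hk'ne
          have hγ'lt : lexLt β γ' :=
            (hlb γ' hγ'A).resolve_right (fun h => hk0ne (by rw [← h]))
          obtain ⟨k1, hk1ge, hk1ag, hk1f, hk1t⟩ :=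
            lexLt_witness_ge hγ'lt (fun i hi => (hk0ag i hi).symm)
          have hk1eq : k1 = k0 := by
            by_contra hc
            exact hk0ne ((hk1ag k0 (by omega)).symm)
          subst hk1eq
          exact Or.inl (lexLt_of_agree (k := k1)
            (fun i hi => by rw [hδ, ← hk1ag i hi]; simp [if_pos (by omega : i < k)])
            (by rw [hδ]; simp only []; rw [if_pos hk0lt]; exact hk1f) hk1t)
      have hδβ : lexLe δ β := hglb δ hδlb
      refine not_lexLt_of_lexLe hδβ (lexLt_of_agree (k := k) (fun i hi => ?_) hkf ?_)
      · rw [hδ]; simp [if_pos hi]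
      · rw [hδ]; simp

end Aux3

/-- For a binary radix system `(Γ, π, B)`, if `α` is the supremum (in the
lexicographic order) of the strings of `Γ̂` beginning with `0` and `β` is the infimum of
the strings of `Γ̂` beginning with `1`, then `(α,β)` is an admissible pair. -/
theorem stmt_14 (R : BinaryRadixSystem) (α β : Omega)
    (hαub : ∀ γ ∈ {γ ∈ hatGamma R.Γ | γ 0 = false}, lexLe γ α)
    (hαlub : ∀ δ : Omega, (∀ γ ∈ {γ ∈ hatGamma R.Γ | γ 0 = false}, lexLe γ δ) → lexLe α δ)
    (hβlb : ∀ γ ∈ {γ ∈ hatGamma R.Γ | γ 0 = true}, lexLe β γ)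
    (hβglb : ∀ δ : Omega, (∀ γ ∈ {γ ∈ hatGamma R.Γ | γ 0 = true}, lexLe δ γ) → lexLe δ β) :
    Admissible α β := by
  classical
  obtain ⟨γ01, hγ01mem, hγ01_0, hγ01_1⟩ := witness01 R
  obtain ⟨γ1, hγ1mem, hγ1_0⟩ := witness1 R
  obtain ⟨γ10, hγ10mem, hγ10_0, hγ10_1⟩ := witness10 R
  have hγ01A : γ01 ∈ {γ ∈ hatGamma R.Γ | γ 0 = false} := ⟨hγ01mem, hγ01_0⟩
  have hγ1A : γ1 ∈ {γ ∈ hatGamma R.Γ | γ 0 = true} := ⟨hγ1mem, hγ1_0⟩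
  -- α starts with 0
  have hα0 : α 0 = false := by
    have hub : ∀ γ ∈ {γ ∈ hatGamma R.Γ | γ 0 = false}, lexLe γ (fun n => decide (0 < n)) := by
      intro γ hγ
      refine lexLe_tailTrue (n := 1) (fun i hi => ?_) (fun i hi => ?_)
      · interval_cases i
        rw [hγ.2]
        simp
      · simp only [decide_eq_true_eq]
        omega
    have hαδ := hαlub _ hub
    rcases hαδ with h | h
    · obtain ⟨k, hkag, hklt⟩ := h
      rw [Bool.lt_iff] at hklt
      cases k with
      | zero => simp at hklt
      | succ k =>
        rw [hkag 0 (Nat.succ_pos k)]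
        simp
    · rw [h]
      simp
  -- β starts with 1
  have hβ0 : β 0 = true := by
    have hlb : ∀ γ ∈ {γ ∈ hatGamma R.Γ | γ 0 = true}, lexLe (fun n => decide (n = 0)) γ := by
      intro γ hγ
      refine lexLe_tailFalse (n := 1) (fun i hi => ?_) (fun i hi => ?_)
      · interval_cases i
        rw [hγ.2]
        simp
      · simp only [decide_eq_false_iff_not]
        omega
    have hβδ := hβglb _ hlb
    rcases hβδ with h | h
    · obtain ⟨k, hkag, hklt⟩ := h
      rw [Bool.lt_iff] at hklt
      cases k with
      | zero => simp at hklt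
      | succ k =>
        rw [← hkag 0 (Nat.succ_pos k)]
        simp
    · rw [← h]
      simp
  -- α 1 = 1
  have hα1 : α 1 = true := by
    by_contra hc
    have hα1f : α 1 = false := by
      cases h' : α 1
      · rfl
      · exact absurd h' hc
    exact not_lexLt_of_lexLe (hαub γ01 hγ01A)
      (lexLt_of_agree (k := 1) (fun i hi => by interval_cases i; rw [hα0, hγ01_0]) hα1f hγ01_1)
  -- β 1 = 0
  have hβ1 : β 1 = false := by
    by_contra hc
    have hβ1t : β 1 = true := by
      cases h' : β 1
      · exact absurd h' hc
      · rfl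
    exact not_lexLt_of_lexLe (hβlb γ10 ⟨hγ10mem, hγ10_0⟩)
      (lexLt_of_agree (k := 1) (fun i hi => by interval_cases i; rw [hγ10_0, hβ0]) hγ10_1 hβ1t)
  refine ⟨hα0, hα1, hβ0, hβ1, ?_, ?_⟩
  · -- no shift of α lies in (α, β]
    rintro n ⟨h1, h2⟩
    rw [shift_iter_eq α n] at h1 h2
    obtain ⟨k, -, hkag, hkf, hkt⟩ := lexLt_witness_ge h1 (fun i hi => absurd hi (Nat.not_lt_zero i))
    obtain ⟨γ, hγA, hγag⟩ := approx_sup _ α hαub hαlub ⟨γ01, hγ01A⟩ (n + k + 1)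
    obtain ⟨hγmem, hγ0⟩ := hγA
    have hSmem : (fun i => γ (n + i)) ∈ hatGamma R.Γ := by
      rw [← shift_iter_eq γ n]
      exact hatGamma_shift_iter R.hshift hγmem n
    cases hαn : α n with
    | false =>
      have hSA : (fun i => γ (n + i)) ∈ {γ ∈ hatGamma R.Γ | γ 0 = false} :=
        ⟨hSmem, by show γ (n + 0) = false; rw [add_zero, hγag n (by omega)]; exact hαn⟩
      refine not_lexLt_of_lexLe (hαub _ hSA)
        (lexLt_of_agree (k := k) (fun i hi => ?_) hkf ?_)
      · show α i = γ (n + i)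
        rw [hγag (n + i) (by omega)]
        exact hkag i hi
      · show γ (n + k) = true
        rw [hγag (n + k) (by omega)]
        exact hkt
    | true =>
      have hSA : (fun i => γ (n + i)) ∈ {γ ∈ hatGamma R.Γ | γ 0 = true} :=
        ⟨hSmem, by show γ (n + 0) = true; rw [add_zero, hγag n (by omega)]; exact hαn⟩
      have hβS : lexLe β (fun i => γ (n + i)) := hβlb _ hSA
      have hSle : lexLe (fun i => γ (n + i)) (fun i => α (n + i)) :=
        lexLe_shift' (hαub γ ⟨hγmem, hγ0⟩) (fun i hi => hγag i (by omega))
      have heq1 : (fun i => γ (n + i)) = β := lexLe_antisymm (lexLe_trans hSle h2) hβS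
      have heq2 : (fun i => α (n + i)) = β := lexLe_antisymm h2 (lexLe_trans hβS hSle)
      have hβmem : β ∈ hatGamma R.Γ := heq1 ▸ hSmem
      have hγeqα : γ = α := by
        funext i
        rcases lt_or_ge i n with h | h
        · exact hγag i (by omega)
        · have h3 : γ (n + (i - n)) = β (i - n) := congrFun heq1 (i - n)
          have h4 : α (n + (i - n)) = β (i - n) := congrFun heq2 (i - n)
          rw [show n + (i - n) = i from by omega] at h3 h4
          rw [h3, h4]
      exact gap_lemma R α β hαub hβlb hα0 hα1 hβ0 (hγeqα ▸ hγmem) hβmem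
  · -- no shift of β lies in [α, β)
    rintro n ⟨h1, h2⟩
    rw [shift_iter_eq β n] at h1 h2
    obtain ⟨k, -, hkag, hkf, hkt⟩ := lexLt_witness_ge h2 (fun i hi => absurd hi (Nat.not_lt_zero i))
    obtain ⟨γ, hγA, hγag⟩ := approx_inf _ β hβlb hβglb ⟨γ1, hγ1A⟩ (n + k + 1)
    obtain ⟨hγmem, hγ0⟩ := hγA
    have hSmem : (fun i => γ (n + i)) ∈ hatGamma R.Γ := by
      rw [← shift_iter_eq γ n]
      exact hatGamma_shift_iter R.hshift hγmem n
    cases hβn : β n with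
    | true =>
      have hSA : (fun i => γ (n + i)) ∈ {γ ∈ hatGamma R.Γ | γ 0 = true} :=
        ⟨hSmem, by show γ (n + 0) = true; rw [add_zero, hγag n (by omega)]; exact hβn⟩
      refine not_lexLt_of_lexLe (hβlb _ hSA)
        (lexLt_of_agree (k := k) (fun i hi => ?_) ?_ hkt)
      · show γ (n + i) = β i
        rw [hγag (n + i) (by omega)]
        exact hkag i hi
      · show γ (n + k) = false
        rw [hγag (n + k) (by omega)]
        exact hkf
    | false =>
      have hSA : (fun i => γ (n + i)) ∈ {γ ∈ hatGamma R.Γ | γ 0 = false} :=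
        ⟨hSmem, by show γ (n + 0) = false; rw [add_zero, hγag n (by omega)]; exact hβn⟩
      have hSα : lexLe (fun i => γ (n + i)) α := hαub _ hSA
      have hSle : lexLe (fun i => β (n + i)) (fun i => γ (n + i)) :=
        lexLe_shift' (hβlb γ ⟨hγmem, hγ0⟩) (fun i hi => (hγag i (by omega)).symm)
      have heq1 : (fun i => γ (n + i)) = α := lexLe_antisymm hSα (lexLe_trans h1 hSle)
      have heq2 : (fun i => β (n + i)) = α := lexLe_antisymm (lexLe_trans hSle hSα) h1
      have hαmem : α ∈ hatGamma R.Γ := heq1 ▸ hSmem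
      have hγeqβ : γ = β := by
        funext i
        rcases lt_or_ge i n with h | h
        · exact hγag i (by omega)
        · have h3 : γ (n + (i - n)) = α (i - n) := congrFun heq1 (i - n)
          have h4 : β (n + (i - n)) = α (i - n) := congrFun heq2 (i - n)
          rw [show n + (i - n) = i from by omega] at h3 h4
          rw [h3, h4]
      exact gap_lemma R α β hαub hβlb hα0 hα1 hβ0 hαmem (hγeqβ ▸ hγmem)
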